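/- Let Γ be a valued constraint language on a finite set D and let f ∈ Pol₁⁺(Γ) be a unary operation in the positive clone of Γ. Then for every instance I = (V, D, 𝒞) of VCSP(Γ), the minimum of Cost_I(s) over all assignments s : V → D is equal to the minimum of Cost_I(s) over all assignments s : V → f(D) taking values in the range of f. -/

import Mathlib

/-! Basic framework for Valued Constraint Satisfaction Problems (VCSP):
operations, clones, weightings, weighted clones, cost functions,
(weighted/fractional) polymorphisms, expressibility and weighted relational clones. -/

/-- A `k`-ary operation on `D`. -/
abbrev Op (D : Type) (k : ℕ) : Type := (Fin k → D) → D

/-- The `i`-th `k`-ary projection on `D`. -/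
def proj (D : Type) {k : ℕ} (i : Fin k) : Op D k := fun x => x i

/-- An operation is a projection. -/
def IsProj {D : Type} {k : ℕ} (f : Op D k) : Prop := ∃ i : Fin k, f = proj D i

/-- Superposition `f[g₁,…,g_k]` of a `k`-ary operation with `k` many `l`-ary operations. -/
def superposeOp {D : Type} {k l : ℕ} (f : Op D k) (g : Fin k → Op D l) : Op D l :=
  fun x => f fun i => g i x

/-- A clone of operations on `D`: contains all projections and is closed under superposition. -/
structure IsClone {D : Type} (C : ∀ k, Set (Op D k)) : Prop where
  proj_mem : ∀ (k : ℕ) (i : Fin k), proj D i ∈ C k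
  superpose_mem : ∀ (k l : ℕ) (f : Op D k) (g : Fin k → Op D l),
    f ∈ C k → (∀ i, g i ∈ C l) → superposeOp f g ∈ C l

/-- A `k`-ary weighting of the clone `C`: a rational-valued function on `k`-ary operations,
vanishing outside `C`, summing to `0`, and negative only on projections. -/
structure IsWeighting {D : Type} [Fintype D] [DecidableEq D] (C : ∀ k, Set (Op D k))
    {k : ℕ} (ω : Op D k → ℚ) : Prop where
  support_mem : ∀ f : Op D k, ω f ≠ 0 → f ∈ C k
  sum_zero : ∑ f : Op D k, ω f = 0
  neg_imp_proj : ∀ f : Op D k, ω f < 0 → IsProj f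

/-- Superposition of a `k`-ary weighting with `k` many `l`-ary operations. -/
def wSuperpose {D : Type} [Fintype D] [DecidableEq D] {k l : ℕ}
    (ω : Op D k → ℚ) (g : Fin k → Op D l) : Op D l → ℚ :=
  fun f' => ∑ f ∈ Finset.univ.filter (fun f : Op D k => superposeOp f g = f'), ω f

/-- A weighted clone over the clone `C`: a nonempty family of weightings of `C` closed under
non-negative scaling, addition of weightings of equal arity and proper superposition. -/
structure IsWeightedClone {D : Type} [Fintype D] [DecidableEq D]
    (C : ∀ k, Set (Op D k)) (W : ∀ k, Set (Op D k → ℚ)) : Prop where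
  clone : IsClone C
  weighting : ∀ (k : ℕ), ∀ ω ∈ W k, IsWeighting C ω
  nonempty : ∃ k, (W k).Nonempty
  scale_mem : ∀ (k : ℕ) (c : ℚ), 0 ≤ c → ∀ ω ∈ W k, (fun f => c * ω f) ∈ W k
  add_mem : ∀ (k : ℕ), ∀ ω₁ ∈ W k, ∀ ω₂ ∈ W k, (fun f => ω₁ f + ω₂ f) ∈ W k
  superpose_mem : ∀ (k l : ℕ), ∀ ω ∈ W k, ∀ g : Fin k → Op D l,
    (∀ i, g i ∈ C l) → IsWeighting C (wSuperpose ω g) → wSuperpose ω g ∈ W l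

/-- The positive clone of a family of weightings: all projections together with all operations
receiving positive weight from some weighting in the family. -/
def posClone {D : Type} [Fintype D] [DecidableEq D] (W : ∀ k, Set (Op D k → ℚ)) :
    ∀ k, Set (Op D k) :=
  fun k => {f | IsProj f ∨ ∃ ω ∈ W k, 0 < ω f}

/-- An `r`-ary cost function on `D`, with values in `ℚ ∪ {∞}`. -/
abbrev CostF (D : Type) (r : ℕ) : Type := (Fin r → D) → WithTop ℚ

/-- The feasibility relation of a cost function. -/
def Feas {D : Type} {r : ℕ} (ϱ : CostF D r) : Set (Fin r → D) := {x | ϱ x ≠ ⊤}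

/-- Coordinate-wise application of a `k`-ary operation to `k` many `r`-tuples. -/
def appRows {D : Type} {k r : ℕ} (f : Op D k) (xs : Fin k → Fin r → D) : Fin r → D :=
  fun j => f fun i => xs i j

/-- `f` is a polymorphism of `ϱ`: `Feas ϱ` is closed under coordinate-wise application of `f`. -/
def IsPolymorphism {D : Type} {k r : ℕ} (f : Op D k) (ϱ : CostF D r) : Prop :=
  ∀ xs : Fin k → Fin r → D, (∀ i, xs i ∈ Feas ϱ) → appRows f xs ∈ Feas ϱ

/-- A valued constraint language on `D`: a set of cost functions of various arities. -/
abbrev VLang (D : Type) : Type := Set (Σ r : ℕ, CostF D r)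

/-- The clone of polymorphisms of a language. -/
def Pol {D : Type} (Γ : VLang D) : ∀ k, Set (Op D k) :=
  fun _ => {f | ∀ ϱ ∈ Γ, IsPolymorphism f ϱ.2}

/-- Multiplication of an element of `ℚ ∪ {∞}` by a rational scalar (`c·∞ = ∞`). -/
def qmul (c : ℚ) (x : WithTop ℚ) : WithTop ℚ := WithTop.map (fun q => c * q) x

/-- The sum `∑_f ω(f)·ϱ(f(x₁,…,x_k))`, over operations with non-zero weight. -/
def wSum {D : Type} [Fintype D] [DecidableEq D] {k r : ℕ}
    (ω : Op D k → ℚ) (ϱ : CostF D r) (xs : Fin k → Fin r → D) : WithTop ℚ :=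
  ∑ f ∈ Finset.univ.filter (fun f : Op D k => ω f ≠ 0), qmul (ω f) (ϱ (appRows f xs))

/-- `ω` is a weighted polymorphism of the language `Γ`. -/
def IsWeightedPolymorphism {D : Type} [Fintype D] [DecidableEq D] (Γ : VLang D)
    {k : ℕ} (ω : Op D k → ℚ) : Prop :=
  IsWeighting (Pol Γ) ω ∧
    ∀ ϱ ∈ Γ, ∀ xs : Fin k → Fin ϱ.1 → D, (∀ i, xs i ∈ Feas ϱ.2) → wSum ω ϱ.2 xs ≤ 0

/-- The weighted polymorphisms of a language. -/
def wPol {D : Type} [Fintype D] [DecidableEq D] (Γ : VLang D) :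
    ∀ k, Set (Op D k → ℚ) :=
  fun _ => {ω | IsWeightedPolymorphism Γ ω}

/-- The positive clone `Pol⁺(Γ)` of a language. -/
def PolPlus {D : Type} [Fintype D] [DecidableEq D] (Γ : VLang D) : ∀ k, Set (Op D k) :=
  posClone (wPol Γ)

/-- The map `D → D` induced by a unary operation. -/
def unaryFun {D : Type} (f : Op D 1) : D → D := fun x => f fun _ => x

/-- A language is a core if every unary operation in its positive clone is bijective. -/
def IsCore {D : Type} [Fintype D] [DecidableEq D] (Γ : VLang D) : Prop :=
  ∀ f ∈ PolPlus Γ 1, Function.Bijective (unaryFun f)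

/-- An idempotent operation. -/
def Idem {D : Type} {k : ℕ} (f : Op D k) : Prop := ∀ x : D, (f fun _ => x) = x

/-- A cyclic operation: `f(x₁,…,x_k) = f(x₂,…,x_k,x₁)`. -/
def CyclicOp {D : Type} {k : ℕ} (f : Op D k) : Prop :=
  ∀ x : Fin k → D, f x = f (x ∘ ⇑(finRotate k))

/-- A conservative operation. -/
def Conservative {D : Type} {k : ℕ} (f : Op D k) : Prop :=
  ∀ x : Fin k → D, ∃ i, f x = x i

/-- A Taylor operation. -/
def IsTaylor {D : Type} {k : ℕ} (t : Op D k) : Prop :=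
  Idem t ∧ ∀ j : Fin k, ∃ a b : Fin k → Fin 2, a j = 0 ∧ b j = 1 ∧
    ∀ u : Fin 2 → D, (t fun i => u (a i)) = t fun i => u (b i)

/-- An instance of `VCSP(Γ)` with variable set `V`: a finite multiset of constraints,
each a tuple of variables together with a cost function from `Γ`. -/
structure VInstance (D : Type) (Γ : VLang D) (V : Type) where
  cons : Multiset (Σ r : ℕ, (Fin r → V) × CostF D r)
  mem_lang : ∀ c ∈ cons, (⟨c.1, c.2.2⟩ : Σ r : ℕ, CostF D r) ∈ Γ

/-- The cost of an assignment for a VCSP instance. -/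
def VInstance.cost {D V : Type} {Γ : VLang D} (I : VInstance D Γ V) (s : V → D) :
    WithTop ℚ :=
  (I.cons.map fun c => c.2.2 fun i => s (c.2.1 i)).sum

/-- A cost function is expressible over a language `Δ`. -/
def Expressible {D : Type} [Fintype D] [DecidableEq D] (Δ : VLang D) {r : ℕ}
    (ϱ : CostF D r) : Prop :=
  ∃ (n : ℕ) (I : VInstance D Δ (Fin n)) (v : Fin r → Fin n),
    ∀ x : Fin r → D,
      ϱ x = (Finset.univ.filter fun s : Fin n → D => ∀ i, s (v i) = x i).inf fun s => I.cost s

/-- A language is closed under expressibility, non-negative scaling and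
addition of rational constants. -/
def IsWClosed {D : Type} [Fintype D] [DecidableEq D] (Δ : VLang D) : Prop :=
  (∀ (r : ℕ) (ϱ : CostF D r), Expressible Δ ϱ → (⟨r, ϱ⟩ : Σ r : ℕ, CostF D r) ∈ Δ) ∧
  (∀ (r : ℕ) (ϱ : CostF D r) (c : ℚ), 0 ≤ c → (⟨r, ϱ⟩ : Σ r : ℕ, CostF D r) ∈ Δ →
    (⟨r, fun x => qmul c (ϱ x)⟩ : Σ r : ℕ, CostF D r) ∈ Δ) ∧
  (∀ (r : ℕ) (ϱ : CostF D r) (c : ℚ), (⟨r, ϱ⟩ : Σ r : ℕ, CostF D r) ∈ Δ →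
    (⟨r, fun x => ϱ x + (c : WithTop ℚ)⟩ : Σ r : ℕ, CostF D r) ∈ Δ)

/-- The weighted relational clone generated by `Γ`: the smallest language containing `Γ`
closed under expressibility, non-negative scaling and addition of rational constants. -/
def wRelClo {D : Type} [Fintype D] [DecidableEq D] (Γ : VLang D) : VLang D :=
  ⋂₀ {Δ : VLang D | Γ ⊆ Δ ∧ IsWClosed Δ}

/-- The weighting `(1/k)(∑_i 1_{f_i} − ∑_i 1_{π_i})` associated with a `k`-tuple of
`k`-ary operations (a multimorphism), weights added with multiplicity. -/
def multimorphismW {D : Type} [Fintype D] [DecidableEq D] {k : ℕ} (F : Fin k → Op D k) :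
    Op D k → ℚ :=
  fun g => (1 / (k : ℚ)) *
    (((Finset.univ.filter fun i : Fin k => F i = g).card : ℚ) -
     ((Finset.univ.filter fun i : Fin k => proj D i = g).card : ℚ))

/-- `Γ` admits the multimorphism `⟨F 0, …, F (k-1)⟩`. -/
def AdmitsMultimorphism {D : Type} [Fintype D] [DecidableEq D] {k : ℕ}
    (Γ : VLang D) (F : Fin k → Op D k) : Prop :=
  multimorphismW F ∈ wPol Γ k

/-- An `m`-ary fractional operation: a probability distribution on `m`-ary operations. -/
def IsFracOp {D : Type} [Fintype D] [DecidableEq D] {m : ℕ} (ω : Op D m → ℝ) : Prop :=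
  (∀ f, 0 ≤ ω f) ∧ ∑ f : Op D m, ω f = 1

/-- Multiplication of an element of `ℚ ∪ {∞}` by a real scalar, landing in `ℝ ∪ {∞}`. -/
def rmul (c : ℝ) (x : WithTop ℚ) : WithTop ℝ := WithTop.map (fun q : ℚ => c * (q : ℝ)) x

/-- `ω` is a fractional polymorphism of the language `Γ`. -/
def IsFracPolymorphism {D : Type} [Fintype D] [DecidableEq D] (Γ : VLang D) {m : ℕ}
    (ω : Op D m → ℝ) : Prop :=
  IsFracOp ω ∧ ∀ ϱ ∈ Γ, ∀ xs : Fin m → Fin ϱ.1 → D, (∀ i, xs i ∈ Feas ϱ.2) →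
    (∑ g ∈ Finset.univ.filter fun g : Op D m => 0 < ω g, rmul (ω g) (ϱ.2 (appRows g xs)))
      ≤ rmul (1 / (m : ℝ)) (∑ i : Fin m, ϱ.2 (xs i))

/-- The positive clone `fPol⁺(Γ)` defined via fractional polymorphisms. -/
def fPolPlus {D : Type} [Fintype D] [DecidableEq D] (Γ : VLang D) : ∀ k, Set (Op D k) :=
  fun k => {f | IsProj f ∨ ∃ ω : Op D k → ℝ, IsFracPolymorphism Γ ω ∧ 0 < ω f}

/-- Application of a binary operation to two elements. -/
def ap2 {D : Type} (f : Op D 2) (a b : D) : D := f ![a, b]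

/-- Application of a ternary operation to three elements. -/
def ap3 {D : Type} (f : Op D 3) (a b c : D) : D := f ![a, b, c]

/-- A ternary operation restricts to a majority operation on a subset `S`. -/
def IsMajorityOn {D : Type} (f : Op D 3) (S : Set D) : Prop :=
  ∀ x ∈ S, ∀ y ∈ S, ap3 f x x y = x ∧ ap3 f x y x = x ∧ ap3 f y x x = x

/-- A ternary operation restricts to a minority operation on a subset `S`. -/
def IsMinorityOn {D : Type} (f : Op D 3) (S : Set D) : Prop :=
  ∀ x ∈ S, ∀ y ∈ S, ap3 f x x y = y ∧ ap3 f x y x = y ∧ ap3 f y x x = y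

/-- The language `Γ_c`: `Γ` together with all unary cost functions `N_a`
(`N_a(a) = 0`, `N_a(x) = ∞` for `x ≠ a`). -/
def withConstants {D : Type} [DecidableEq D] (Γ : VLang D) : VLang D :=
  Γ ∪ {p : Σ r : ℕ, CostF D r |
        ∃ a : D, p = ⟨1, fun x => if x 0 = a then (0 : WithTop ℚ) else ⊤⟩}

/-- A language is conservative if it contains every `{0,1}`-valued unary cost function. -/
def ConservativeLang {D : Type} (Γ : VLang D) : Prop :=
  ∀ ϱ : CostF D 1, (∀ x, ϱ x = 0 ∨ ϱ x = 1) → (⟨1, ϱ⟩ : Σ r : ℕ, CostF D r) ∈ Γ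

/-- The coordinate-wise action of a `k`-ary operation on `A` on the power `A^n`. -/
def opPow {A : Type} (n : ℕ) {k : ℕ} (f : Op A k) : Op (Fin n → A) k :=
  fun xs c => f fun i => xs i c

/-- Regrouping an `(n·r)`-tuple over `A` into an `r`-tuple of elements of `A^n`. -/
def regroup (A : Type) (n r : ℕ) (y : Fin (n * r) → A) : Fin r → Fin n → A :=
  fun j c => y (finProdFinEquiv (c, j))

/-! Auxiliary lemmas for Statement 18. -/

private lemma msum_ne_top {m : Multiset (WithTop ℚ)} (h : m.sum ≠ ⊤) :
    ∀ x ∈ m, x ≠ ⊤ := by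
  induction m using Multiset.induction_on with
  | empty => intro x hx; simp at hx
  | cons a s ih =>
      rw [Multiset.sum_cons, WithTop.add_ne_top] at h
      intro x hx
      rcases Multiset.mem_cons.mp hx with rfl | hx
      · exact h.1
      · exact ih h.2 x hx

private lemma msum_ne_top' {m : Multiset (WithTop ℚ)} (h : ∀ x ∈ m, x ≠ ⊤) :
    m.sum ≠ ⊤ := by
  induction m using Multiset.induction_on with
  | empty => simp
  | cons a s ih =>
      rw [Multiset.sum_cons, WithTop.add_ne_top]
      exact ⟨h a (Multiset.mem_cons_self a s), ih fun x hx => h x (Multiset.mem_cons_of_mem hx)⟩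

private lemma msum_nonpos {m : Multiset (WithTop ℚ)} (h : ∀ x ∈ m, x ≤ 0) :
    m.sum ≤ 0 := by
  induction m using Multiset.induction_on with
  | empty => simp
  | cons a s ih =>
      rw [Multiset.sum_cons]
      calc a + s.sum ≤ 0 + 0 :=
            add_le_add (h a (Multiset.mem_cons_self a s))
              (ih fun x hx => h x (Multiset.mem_cons_of_mem hx))
        _ = 0 := by simp

private lemma qmul_coe (c q : ℚ) : qmul c (q : WithTop ℚ) = ((c * q : ℚ) : WithTop ℚ) := rfl

private lemma qmul_add' (c : ℚ) (a b : WithTop ℚ) : qmul c (a + b) = qmul c a + qmul c b := by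
  induction a using WithTop.recTopCoe with
  | top => simp [qmul]
  | coe a =>
      induction b using WithTop.recTopCoe with
      | top => simp [qmul]
      | coe b =>
          rw [← WithTop.coe_add, qmul_coe, qmul_coe, qmul_coe, ← WithTop.coe_add, mul_add]

private lemma qmul_msum (c : ℚ) (m : Multiset (WithTop ℚ)) :
    qmul c m.sum = (m.map (qmul c)).sum := by
  induction m using Multiset.induction_on with
  | empty =>
      show qmul c 0 = _
      rw [show (0 : WithTop ℚ) = ((0 : ℚ) : WithTop ℚ) from rfl, qmul_coe]
      simp
  | cons a s ih => rw [Multiset.sum_cons, qmul_add', ih, Multiset.map_cons, Multiset.sum_cons]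

private lemma msum_finsum_swap {α β : Type} (S : Finset β) (m : Multiset α)
    (F : β → α → WithTop ℚ) :
    (m.map fun c => ∑ g ∈ S, F g c).sum = ∑ g ∈ S, (m.map (F g)).sum := by
  induction m using Multiset.induction_on with
  | empty => simp
  | cons a s ih =>
      rw [Multiset.map_cons, Multiset.sum_cons, ih]
      simp [Finset.sum_add_distrib]

theorem min_cost_eq_min_cost_on_range {D : Type} [Fintype D] [DecidableEq D] [Nonempty D]
    (Γ : VLang D) (f : Op D 1) (hf : f ∈ PolPlus Γ 1)
    {V : Type} [Fintype V] [DecidableEq V] (I : VInstance D Γ V) :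
    (Finset.univ.inf fun s : V → D => I.cost s) =
      (Finset.univ.filter fun s : V → D =>
        ∀ v, s v ∈ Finset.univ.image (unaryFun f)).inf fun s => I.cost s := by
  apply le_antisymm (Finset.inf_mono (Finset.filter_subset _ _))
  obtain ⟨s, -, hs⟩ := Finset.exists_mem_eq_inf (Finset.univ : Finset (V → D))
    Finset.univ_nonempty (fun s => I.cost s)
  rw [hs]
  rcases hf with ⟨i, rfl⟩ | ⟨ω, hω, hωf⟩
  · -- f is a projection, hence the identity
    refine Finset.inf_le ?_
    refine Finset.mem_filter.mpr ⟨Finset.mem_univ _, fun v => ?_⟩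
    exact Finset.mem_image.mpr ⟨s v, Finset.mem_univ _, rfl⟩
  · by_cases htop : I.cost s = ⊤
    · rw [htop]; exact le_top
    obtain ⟨m, hm⟩ := WithTop.ne_top_iff_exists.mp htop
    obtain ⟨hWt, hineq⟩ := hω
    -- each constraint is feasible under `s`
    have hfeas : ∀ c ∈ I.cons, (fun i => s (c.2.1 i)) ∈ Feas c.2.2 := by
      intro c hc
      exact msum_ne_top htop _
        (Multiset.mem_map_of_mem (f := fun c => c.2.2 fun i => s (c.2.1 i)) hc)
    set S : Finset (Op D 1) := Finset.univ.filter (fun g : Op D 1 => ω g ≠ 0) with hS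
    set Q : Op D 1 → WithTop ℚ := fun g => I.cost (fun v => unaryFun g (s v)) with hQ
    have hQeq : ∀ g : Op D 1, Q g =
        (I.cons.map fun c => c.2.2 (appRows g (fun _ i => s (c.2.1 i)))).sum := by
      intro g; rfl
    have hQfin : ∀ g ∈ S, Q g ≠ ⊤ := by
      intro g hg
      have hpol : g ∈ Pol Γ 1 := hWt.support_mem g (Finset.mem_filter.mp hg).2
      rw [hQeq]
      apply msum_ne_top'
      intro x hx
      obtain ⟨c, hc, rfl⟩ := Multiset.mem_map.mp hx
      exact hpol ⟨c.1, c.2.2⟩ (I.mem_lang c hc) (fun _ i => s (c.2.1 i)) (fun _ => hfeas c hc)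
    -- the key inequality from the weighted polymorphism, summed over constraints
    have hTotal : ∑ g ∈ S, qmul (ω g) (Q g) ≤ 0 := by
      have hterm : ∀ c ∈ I.cons,
          (∑ g ∈ S, qmul (ω g) (c.2.2 (appRows g (fun _ i => s (c.2.1 i))))) ≤ 0 := by
        intro c hc
        exact hineq ⟨c.1, c.2.2⟩ (I.mem_lang c hc) (fun _ i => s (c.2.1 i))
          (fun _ => hfeas c hc)
      have hswap :
          ∑ g ∈ S, qmul (ω g) (Q g)
            = (I.cons.map fun c =>
                ∑ g ∈ S, qmul (ω g) (c.2.2 (appRows g (fun _ i => s (c.2.1 i))))).sum := by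
        rw [msum_finsum_swap]
        refine Finset.sum_congr rfl fun g _ => ?_
        rw [hQeq, qmul_msum, Multiset.map_map]
        rfl
      rw [hswap]
      apply msum_nonpos
      intro x hx
      obtain ⟨c, hc, rfl⟩ := Multiset.mem_map.mp hx
      exact hterm c hc
    -- pass to rationals
    set q : Op D 1 → ℚ := fun g => WithTop.untopD 0 (Q g) with hq
    have hQg : ∀ g ∈ S, Q g = ((q g : ℚ) : WithTop ℚ) := by
      intro g hg
      obtain ⟨a, ha⟩ := WithTop.ne_top_iff_exists.mp (hQfin g hg)
      have h2 : q g = a := by rw [hq]; simp [← ha]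
      rw [h2, ← ha]
    have hrat : ∑ g ∈ S, ω g * q g ≤ 0 := by
      have : ((∑ g ∈ S, ω g * q g : ℚ) : WithTop ℚ) ≤ ((0 : ℚ) : WithTop ℚ) := by
        rw [WithTop.coe_sum]
        calc ∑ g ∈ S, ((ω g * q g : ℚ) : WithTop ℚ)
            = ∑ g ∈ S, qmul (ω g) (Q g) := by
              refine Finset.sum_congr rfl fun g hg => ?_
              rw [hQg g hg, qmul_coe]
          _ ≤ 0 := hTotal
          _ = ((0 : ℚ) : WithTop ℚ) := rfl
      exact_mod_cast this
    have hsum0 : ∑ g ∈ S, ω g = 0 := by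
      rw [hS, Finset.sum_filter_ne_zero]
      exact hWt.sum_zero
    have hfS : f ∈ S := Finset.mem_filter.mpr ⟨Finset.mem_univ _, ne_of_gt hωf⟩
    have hposge : ∀ g ∈ S, 0 < ω g → m ≤ q g := by
      intro g hg hpos
      have h1 : (Finset.univ.inf fun s : V → D => I.cost s) ≤ Q g :=
        Finset.inf_le (Finset.mem_univ _)
      rw [hs, ← hm, hQg g hg] at h1
      exact_mod_cast h1
    have hnegeq : ∀ g ∈ S, ω g < 0 → q g = m := by
      intro g hg hneg
      obtain ⟨i, rfl⟩ := hWt.neg_imp_proj g hneg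
      have : Q (proj D i) = I.cost s := rfl
      rw [hQg _ hg, ← hm] at this
      exact_mod_cast this
    have hterms : ∀ g ∈ S, 0 ≤ ω g * (q g - m) := by
      intro g hg
      rcases lt_trichotomy (ω g) 0 with h | h | h
      · rw [hnegeq g hg h]; simp
      · exact absurd h (Finset.mem_filter.mp hg).2
      · exact mul_nonneg h.le (sub_nonneg.mpr (hposge g hg h))
    have hsum_eq : ∑ g ∈ S, ω g * (q g - m) = ∑ g ∈ S, ω g * q g := by
      simp only [mul_sub, Finset.sum_sub_distrib, ← Finset.sum_mul, hsum0, zero_mul, sub_zero]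
    have hkey : ω f * (q f - m) ≤ 0 := by
      calc ω f * (q f - m) ≤ ∑ g ∈ S, ω g * (q g - m) :=
            Finset.single_le_sum hterms hfS
        _ = ∑ g ∈ S, ω g * q g := hsum_eq
        _ ≤ 0 := hrat
    have hqfm : q f ≤ m := by nlinarith
    -- finish: the assignment `f ∘ s` is range-valued and has cost ≤ min
    have hmem : (fun v => unaryFun f (s v)) ∈ Finset.univ.filter fun s : V → D =>
        ∀ v, s v ∈ Finset.univ.image (unaryFun f) :=
      Finset.mem_filter.mpr ⟨Finset.mem_univ _, fun v =>
        Finset.mem_image.mpr ⟨s v, Finset.mem_univ _, rfl⟩⟩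
    calc ((Finset.univ.filter fun s : V → D =>
            ∀ v, s v ∈ Finset.univ.image (unaryFun f)).inf fun s => I.cost s)
        ≤ Q f := Finset.inf_le hmem
      _ = ((q f : ℚ) : WithTop ℚ) := hQg f hfS
      _ ≤ ((m : ℚ) : WithTop ℚ) := by exact_mod_cast hqfm
      _ = I.cost s := hm
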